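/- There exists a constant C ≥ 1, depending only on m and n, such that for every integer k ≥ 2, every real t ≥ 2, every unimodular lattice x = g·ℤ^d with g ∈ SL_d(ℝ), every M > 0, and all tuples (s_1,…,s_k) and (s'_1,…,s'_k) of elements of B(1) satisfying Σ_{j=1}^{k} e^{−(m+n)(j−1)t}·s_j = Σ_{j=1}^{k} e^{−(m+n)(j−1)t}·s'_j: if α̃^t( g_t·h_{s'_{k−1}}·g_t·h_{s'_{k−2}}·⋯·g_t·h_{s'_1}·x ) > M, then α̃^t( g_t·h_{s_{k−1}}·g_t·h_{s_{k−2}}·⋯·g_t·h_{s_1}·x ) > M/C. -/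

import Mathlib

open scoped BigOperators
open MeasureTheory ProbabilityTheory

noncomputable section

namespace DiagFlows

/-- The index type for `ℝ^{m+n}`, split into the first `m` and the last `n` coordinates. -/
abbrev Idx (m n : ℕ) := Fin m ⊕ Fin n

/-- The space of `m × n` real matrices equipped with the Euclidean (Frobenius) norm. -/
abbrev Mspace (m n : ℕ) := EuclideanSpace ℝ (Fin m × Fin n)

/-- Interpret a point of `Mspace m n` as an `m × n` matrix. -/
def toMat {m n : ℕ} (s : Mspace m n) : Matrix (Fin m) (Fin n) ℝ :=
  Matrix.of fun i j => s (i, j)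

/-- The diagonal matrix `g_t = diag(e^{nt},…,e^{nt},e^{-mt},…,e^{-mt})`. -/
def gt (m n : ℕ) (t : ℝ) : Matrix (Idx m n) (Idx m n) ℝ :=
  Matrix.diagonal (Sum.elim (fun _ => Real.exp (n * t)) (fun _ => Real.exp (-(m * t))))

/-- The block matrix `h_s = [[1, s], [0, 1]]`. -/
def hMat {m n : ℕ} (s : Matrix (Fin m) (Fin n) ℝ) : Matrix (Idx m n) (Idx m n) ℝ :=
  Matrix.fromBlocks 1 s 0 1

/-- `w` is a vector of the lattice `g·ℤ^{m+n}`. -/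
def IsLatticeVec {m n : ℕ} (g : Matrix (Idx m n) (Idx m n) ℝ) (w : Idx m n → ℝ) : Prop :=
  ∃ v : Idx m n → ℤ, w = g.mulVec fun j => (v j : ℝ)

/-- The Gram matrix of a tuple of vectors: the matrix of Euclidean inner products. -/
def gram {ι : Type*} [Fintype ι] {i : ℕ} (w : Fin i → ι → ℝ) : Matrix (Fin i) (Fin i) ℝ :=
  Matrix.of fun a b => ∑ j, w a j * w b j

/-- The height function `α_i` of the lattice `x = g·ℤ^{m+n}`: the supremum of
`det(Gram(w₁,…,w_i))^{-1/2}` over all linearly independent `i`-tuples of vectors of the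
lattice, with the conventions `α_0(x) = 1` and `α_{m+n}(x) = 1`. -/
def alpha (m n : ℕ) (g : Matrix (Idx m n) (Idx m n) ℝ) (i : ℕ) : ℝ :=
  if i = 0 ∨ i = m + n then 1
  else sSup {r : ℝ | ∃ w : Fin i → Idx m n → ℝ,
    (∀ a, IsLatticeVec g (w a)) ∧ LinearIndependent ℝ w ∧
    r = (gram w).det ^ (-(1 / 2) : ℝ)}

/-- The combined height function
`α̃^t(x) = Σ_{i=0}^{m+n} (m+n-1)^{-i(m+n-i)} e^{-(mn+1/2)i(m+n-i)t} α_i(x)^{1/2}`. -/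
def alphaT (m n : ℕ) (t : ℝ) (g : Matrix (Idx m n) (Idx m n) ℝ) : ℝ :=
  ∑ i ∈ Finset.range (m + n + 1),
    (((m + n : ℝ) - 1) ^ (i * (m + n - i)))⁻¹ *
      Real.exp (-((m * n : ℝ) + 1 / 2) * ((i * (m + n - i) : ℕ) : ℝ) * t) *
      Real.sqrt (alpha m n g i)

/-- The product `g_t·h_{s_l}·g_t·h_{s_{l−1}}·⋯·g_t·h_{s_1}` (and `1` for `l = 0`). -/
def word (m n : ℕ) (t : ℝ) (s : ℕ → Mspace m n) : ℕ → Matrix (Idx m n) (Idx m n) ℝ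
  | 0 => 1
  | l + 1 => gt m n t * hMat (toMat (s (l + 1))) * word m n t s l


section Aux
open Matrix

/-! ### Auxiliary lemmas -/

lemma gram_eq {ι : Type*} [Fintype ι] {i : ℕ} (w : Fin i → ι → ℝ) :
    gram w = Matrix.of w * (Matrix.of w)ᵀ := by
  ext a b
  simp [gram, Matrix.mul_apply]

lemma gram_quad {ι : Type*} [Fintype ι] {i : ℕ} (w : Fin i → ι → ℝ) (c : Fin i → ℝ) :
    dotProduct c ((gram w).mulVec c) = ∑ j, (∑ a, c a * w a j) ^ 2 := by
  rw [gram_eq, ← Matrix.mulVec_mulVec, dotProduct_mulVec]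
  simp only [Matrix.vecMul, Matrix.mulVec, dotProduct, Matrix.transpose_apply,
    Matrix.of_apply, sq]
  refine Finset.sum_congr rfl fun j _ => ?_
  rw [mul_comm]
  congr 1
  all_goals exact Finset.sum_congr rfl fun a _ => mul_comm _ _

lemma gram_isHermitian {ι : Type*} [Fintype ι] {i : ℕ} (w : Fin i → ι → ℝ) :
    (gram w).IsHermitian := by
  ext a b
  simp only [gram, Matrix.conjTranspose_apply, Matrix.of_apply, star_trivial]
  exact Finset.sum_congr rfl fun j _ => mul_comm _ _

lemma gram_posSemidef {ι : Type*} [Fintype ι] {i : ℕ} (w : Fin i → ι → ℝ) :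
    (gram w).PosSemidef := by
  refine Matrix.PosSemidef.of_dotProduct_mulVec_nonneg (gram_isHermitian w) fun c => ?_
  rw [star_trivial, gram_quad]
  positivity

lemma gram_posDef {ι : Type*} [Fintype ι] {i : ℕ} {w : Fin i → ι → ℝ}
    (hw : LinearIndependent ℝ w) : (gram w).PosDef := by
  refine Matrix.PosDef.of_dotProduct_mulVec_pos (gram_isHermitian w) fun c hc => ?_
  rw [star_trivial, gram_quad]
  have hu : (∑ a, c a • w a) ≠ 0 := by
    intro h
    exact hc (funext fun a => (Fintype.linearIndependent_iff.1 hw) c h a)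
  have : ∃ j, (∑ a, c a * w a j) ≠ 0 := by
    by_contra h
    push_neg at h
    exact hu (funext fun j => by simpa [Finset.sum_apply] using h j)
  obtain ⟨j, hj⟩ := this
  exact Finset.sum_pos' (fun j _ => sq_nonneg _) ⟨j, Finset.mem_univ j, by positivity⟩

lemma det_one_add_psd {i : ℕ} {M : Matrix (Fin i) (Fin i) ℝ} (hM : M.PosSemidef) :
    1 ≤ ((1 : Matrix (Fin i) (Fin i) ℝ) + M).det := by
  have hH := hM.isHermitian
  have hspec := hH.spectral_theorem
  simp only [Unitary.conjStarAlgAut_apply, Unitary.coe_star] at hspec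
  set U : Matrix (Fin i) (Fin i) ℝ := (hH.eigenvectorUnitary : Matrix (Fin i) (Fin i) ℝ) with hU
  set V : Matrix (Fin i) (Fin i) ℝ := Matrix.diagonal (RCLike.ofReal ∘ hH.eigenvalues) with hV
  have hunit : U * star U = 1 := Matrix.mem_unitaryGroup_iff.mp hH.eigenvectorUnitary.2
  have h1 : (1 : Matrix (Fin i) (Fin i) ℝ) + M
      = U * ((1 : Matrix (Fin i) (Fin i) ℝ) + V) * star U := by
    rw [mul_add, add_mul, mul_one, hunit, ← hspec]
  have hdetU : U.det * (star U).det = 1 := by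
    rw [← Matrix.det_mul, hunit, Matrix.det_one]
  have hgeD : 1 ≤ ((1 : Matrix (Fin i) (Fin i) ℝ) + V).det := by
    have hdiag : (1 : Matrix (Fin i) (Fin i) ℝ) + V
        = Matrix.diagonal (fun j => 1 + hH.eigenvalues j) := by
      rw [hV, ← Matrix.diagonal_one, Matrix.diagonal_add]
      rfl
    rw [hdiag, Matrix.det_diagonal]
    calc (1 : ℝ) = ∏ _j : Fin i, (1 : ℝ) := by simp
    _ ≤ ∏ j, (1 + hH.eigenvalues j) := by
        refine Finset.prod_le_prod (fun j _ => one_pos.le) fun j _ => ?_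
        have := hM.eigenvalues_nonneg j
        linarith
  rw [h1, Matrix.det_mul, Matrix.det_mul]
  have heq : U.det * ((1 : Matrix (Fin i) (Fin i) ℝ) + V).det * (star U).det
      = ((1 : Matrix (Fin i) (Fin i) ℝ) + V).det := by
    rw [mul_comm U.det _, mul_assoc, hdetU, mul_one]
  rw [heq]
  exact hgeD

lemma det_le_det_of_psd {i : ℕ} {A B : Matrix (Fin i) (Fin i) ℝ} (hA : A.PosDef)
    (hBA : (B - A).PosSemidef) : A.det ≤ B.det := by
  classical
  open scoped MatrixOrder in set S := CFC.sqrt A with hS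
  open scoped MatrixOrder in have hSpsd : S.PosSemidef := (CFC.sqrt_nonneg A).posSemidef
  open scoped MatrixOrder in have hSS : S * S = A := CFC.sqrt_mul_sqrt_self A hA.posSemidef.nonneg
  clear_value S
  have hdetS : S.det * S.det = A.det := by rw [← Matrix.det_mul, hSS]
  have hdetA : 0 < A.det := hA.det_pos
  have hdetSne : S.det ≠ 0 := fun h => by
    rw [h, mul_zero] at hdetS; exact hdetA.ne' hdetS.symm
  have hSunit : IsUnit S.det := isUnit_iff_ne_zero.mpr hdetSne
  have hSinv : S * S⁻¹ = 1 := Matrix.mul_nonsing_inv S hSunit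
  have hSinv' : S⁻¹ * S = 1 := Matrix.nonsing_inv_mul S hSunit
  have hSinvH : (S⁻¹).IsHermitian := hSpsd.isHermitian.inv
  set N := B - A with hN
  set M := S⁻¹ * N * S⁻¹ with hM
  have hMpsd : M.PosSemidef := by
    have := hBA.mul_mul_conjTranspose_same S⁻¹
    rwa [hSinvH.eq] at this
  have hB : B = S * ((1 : Matrix (Fin i) (Fin i) ℝ) + M) * S := by
    have e1 : S * ((1 : Matrix (Fin i) (Fin i) ℝ) + M) * S = A + N := by
      rw [mul_add, add_mul, mul_one, hSS, hM]
      congr 1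
      calc S * (S⁻¹ * N * S⁻¹) * S = S * S⁻¹ * N * (S⁻¹ * S) := by
            simp only [mul_assoc]
        _ = N := by rw [hSinv, hSinv', one_mul, mul_one]
    rw [e1, hN]
    abel
  calc A.det = A.det * 1 := by ring
  _ ≤ A.det * ((1 : Matrix (Fin i) (Fin i) ℝ) + M).det :=
      mul_le_mul_of_nonneg_left (det_one_add_psd hMpsd) hdetA.le
  _ = B.det := by
      rw [hB, Matrix.det_mul, Matrix.det_mul]
      linear_combination ((1 : Matrix (Fin i) (Fin i) ℝ) + M).det * hdetS.symm

lemma mulVec_sq_sum_le {ι : Type*} [Fintype ι] (h : Matrix ι ι ℝ) (u : ι → ℝ) :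
    ∑ j, (h.mulVec u j) ^ 2 ≤ (∑ p, ∑ q, (h p q) ^ 2) * ∑ l, (u l) ^ 2 := by
  rw [Finset.sum_mul]
  refine Finset.sum_le_sum fun j _ => ?_
  simpa [Matrix.mulVec, dotProduct] using
    Finset.sum_mul_sq_le_sq_mul_sq Finset.univ (fun l => h j l) u

lemma det_gram_mulVec_le {ι : Type*} [Fintype ι] {i : ℕ} (h : Matrix ι ι ℝ)
    {w : Fin i → ι → ℝ} (hw : LinearIndependent ℝ w)
    (hw' : LinearIndependent ℝ fun a => h.mulVec (w a))
    {K : ℝ} (hK : ∑ p, ∑ q, (h p q) ^ 2 ≤ K) :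
    (gram fun a => h.mulVec (w a)).det ≤ K ^ i * (gram w).det := by
  have hK0 : (0 : ℝ) ≤ K := le_trans (by positivity) hK
  have hG := gram_posDef hw
  have hG' := gram_posDef hw'
  have hle : (K • gram w - gram fun a => h.mulVec (w a)).PosSemidef := by
    refine Matrix.PosSemidef.of_dotProduct_mulVec_nonneg ?_ ?_
    · show _ᴴ = _
      rw [Matrix.conjTranspose_sub, Matrix.conjTranspose_smul, (gram_isHermitian w).eq,
        (gram_isHermitian _).eq, star_trivial]
    · intro c
      rw [star_trivial, Matrix.sub_mulVec, dotProduct_sub, Matrix.smul_mulVec,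
        dotProduct_smul, smul_eq_mul, gram_quad, gram_quad, sub_nonneg]
      have key : ∀ j, (∑ a, c a * h.mulVec (w a) j) = h.mulVec (fun l => ∑ a, c a * w a l) j := by
        intro j
        simp only [Matrix.mulVec, dotProduct, Finset.mul_sum, Finset.sum_mul]
        rw [Finset.sum_comm]
        exact Finset.sum_congr rfl fun a _ => Finset.sum_congr rfl fun l _ => by ring
      calc ∑ j, (∑ a, c a * h.mulVec (w a) j) ^ 2
          = ∑ j, (h.mulVec (fun l => ∑ a, c a * w a l) j) ^ 2 :=
            Finset.sum_congr rfl fun j _ => by rw [key j]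
        _ ≤ (∑ p, ∑ q, (h p q) ^ 2) * ∑ l, (∑ a, c a * w a l) ^ 2 := mulVec_sq_sum_le _ _
        _ ≤ K * ∑ l, (∑ a, c a * w a l) ^ 2 :=
            mul_le_mul_of_nonneg_right hK (by positivity)
  calc (gram fun a => h.mulVec (w a)).det ≤ (K • gram w).det := det_le_det_of_psd hG' hle
  _ = K ^ i * (gram w).det := by
      rw [Matrix.det_smul]
      simp

lemma li_mulVec {ι : Type*} [Fintype ι] [DecidableEq ι] {h h' : Matrix ι ι ℝ}
    (hinv : h' * h = 1) {i : ℕ} {w : Fin i → ι → ℝ} (hw : LinearIndependent ℝ w) :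
    LinearIndependent ℝ fun a => h.mulVec (w a) := by
  have hker : LinearMap.ker h.mulVecLin = ⊥ := by
    apply LinearMap.ker_eq_bot_of_inverse (g := h'.mulVecLin)
    rw [← Matrix.mulVecLin_mul, hinv, Matrix.mulVecLin_one]
  have := hw.map' h.mulVecLin hker
  exact this

lemma rpow_neg_half_le {a b c : ℝ} (ha : 0 < a) (hb : 0 < b) (hc : 1 ≤ c)
    (hle : b ≤ c ^ 2 * a) : a ^ (-(1 / 2) : ℝ) ≤ c * b ^ (-(1 / 2) : ℝ) := by
  have hc0 : 0 < c := lt_of_lt_of_le one_pos hc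
  have h1 : ∀ x : ℝ, 0 < x → x ^ (-(1 / 2) : ℝ) = (Real.sqrt x)⁻¹ := by
    intro x hx
    rw [Real.rpow_neg hx.le, Real.sqrt_eq_rpow]
  rw [h1 a ha, h1 b hb]
  have hsa : 0 < Real.sqrt a := Real.sqrt_pos.mpr ha
  have hsb : 0 < Real.sqrt b := Real.sqrt_pos.mpr hb
  have hsqb : Real.sqrt b ≤ c * Real.sqrt a := by
    calc Real.sqrt b ≤ Real.sqrt (c ^ 2 * a) := Real.sqrt_le_sqrt hle
    _ = c * Real.sqrt a := by
        rw [Real.sqrt_mul (sq_nonneg c), Real.sqrt_sq hc0.le]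
  rw [inv_eq_one_div, ← div_eq_mul_inv, div_le_div_iff₀ hsa hsb]
  nlinarith

/-- The key single-step comparison for `alpha`. -/
lemma alpha_le_mul {m n : ℕ} (h h' : Matrix (Idx m n) (Idx m n) ℝ)
    (hinv : h' * h = 1) (hinv' : h * h' = 1) {K : ℝ} (hK1 : 1 ≤ K)
    (hKh : ∑ p, ∑ q, (h p q) ^ 2 ≤ K) (hKh' : ∑ p, ∑ q, (h' p q) ^ 2 ≤ K)
    (g : Matrix (Idx m n) (Idx m n) ℝ) (i : ℕ) :
    alpha m n g i ≤ K ^ (m + n) * alpha m n (h * g) i := by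
  classical
  have hK0 : (0 : ℝ) < K := lt_of_lt_of_le one_pos hK1
  have hc1 : (1 : ℝ) ≤ K ^ (m + n) := one_le_pow₀ hK1
  have hc0 : (0 : ℝ) < K ^ (m + n) := lt_of_lt_of_le one_pos hc1
  have step : ∀ (h₁ h₁' : Matrix (Idx m n) (Idx m n) ℝ), h₁' * h₁ = 1 →
      (∑ p, ∑ q, (h₁ p q) ^ 2 ≤ K) →
      ∀ (g₁ : Matrix (Idx m n) (Idx m n) ℝ) (r : ℝ),
      (∃ w : Fin i → Idx m n → ℝ, (∀ a, IsLatticeVec g₁ (w a)) ∧ LinearIndependent ℝ w ∧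
        r = (gram w).det ^ (-(1 / 2) : ℝ)) →
      (∃ r' : ℝ, (∃ w : Fin i → Idx m n → ℝ, (∀ a, IsLatticeVec (h₁ * g₁) (w a)) ∧
          LinearIndependent ℝ w ∧ r' = (gram w).det ^ (-(1 / 2) : ℝ)) ∧
        r ≤ K ^ (m + n) * r') := by
    intro h₁ h₁' hinv₁ hKh₁ g₁ r ⟨w, hwlat, hwli, hrw⟩
    have hwli' : LinearIndependent ℝ fun a => h₁.mulVec (w a) := li_mulVec hinv₁ hwli
    have hile : i ≤ m + n := by
      have := hwli.fintype_card_le_finrank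
      simpa [Module.finrank_fintype_fun_eq_card] using this
    have hdet : (gram fun a => h₁.mulVec (w a)).det ≤ (K ^ (m + n)) ^ 2 * (gram w).det := by
      calc (gram fun a => h₁.mulVec (w a)).det ≤ K ^ i * (gram w).det :=
            det_gram_mulVec_le h₁ hwli hwli' hKh₁
      _ ≤ (K ^ (m + n)) ^ 2 * (gram w).det := by
          have h1 : K ^ i ≤ (K ^ (m + n)) ^ 2 := by
            rw [← pow_mul]
            exact pow_le_pow_right₀ hK1 (le_trans hile (by omega))
          exact mul_le_mul_of_nonneg_right h1 (gram_posDef hwli).det_pos.le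
    refine ⟨(gram fun a => h₁.mulVec (w a)).det ^ (-(1 / 2) : ℝ),
      ⟨fun a => h₁.mulVec (w a), fun a => ?_, hwli', rfl⟩, ?_⟩
    · obtain ⟨v, hv⟩ := hwlat a
      exact ⟨v, by simp only []; rw [hv, Matrix.mulVec_mulVec]⟩
    · rw [hrw]
      exact rpow_neg_half_le (gram_posDef hwli).det_pos (gram_posDef hwli').det_pos hc1 hdet
  by_cases hi : i = 0 ∨ i = m + n
  · simp only [alpha, if_pos hi]
    linarith
  · simp only [alpha, if_neg hi]
    set S := {r : ℝ | ∃ w : Fin i → Idx m n → ℝ,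
      (∀ a, IsLatticeVec g (w a)) ∧ LinearIndependent ℝ w ∧
      r = (gram w).det ^ (-(1 / 2) : ℝ)} with hSdef
    set S' := {r : ℝ | ∃ w : Fin i → Idx m n → ℝ,
      (∀ a, IsLatticeVec (h * g) (w a)) ∧ LinearIndependent ℝ w ∧
      r = (gram w).det ^ (-(1 / 2) : ℝ)} with hS'def
    have hS'nonneg : ∀ r ∈ S', 0 ≤ r := by
      rintro r ⟨w, _, hli, rfl⟩
      exact (Real.rpow_pos_of_pos (gram_posDef hli).det_pos _).le
    have hS'sup : 0 ≤ sSup S' := Real.sSup_nonneg hS'nonneg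
    rcases Set.eq_empty_or_nonempty S with hS | hS
    · rw [hS, Real.sSup_empty]
      positivity
    by_cases hbdd : BddAbove S'
    · refine Real.sSup_le (fun r hr => ?_) (by positivity)
      obtain ⟨r', hr'S', hrr'⟩ := step h h' hinv hKh g r hr
      calc r ≤ K ^ (m + n) * r' := hrr'
      _ ≤ K ^ (m + n) * sSup S' :=
          mul_le_mul_of_nonneg_left (le_csSup hbdd hr'S') hc0.le
    · have hSbdd : ¬ BddAbove S := by
        intro ⟨B, hB⟩
        apply hbdd
        refine ⟨K ^ (m + n) * B, fun r' hr' => ?_⟩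
        have hgg : h' * (h * g) = g := by rw [← mul_assoc, hinv, one_mul]
        obtain ⟨r'', hr''S, hr'r''⟩ := step h' h hinv' hKh' (h * g) r' hr'
        rw [hgg] at hr''S
        calc r' ≤ K ^ (m + n) * r'' := hr'r''
        _ ≤ K ^ (m + n) * B := mul_le_mul_of_nonneg_left (hB hr''S) hc0.le
      rw [Real.sSup_of_not_bddAbove hbdd, Real.sSup_of_not_bddAbove hSbdd, mul_zero]

/-- The comparison for `alphaT`. -/
lemma alphaT_le_mul {m n : ℕ} (hmn : 1 ≤ m + n) (t : ℝ)
    (h h' : Matrix (Idx m n) (Idx m n) ℝ)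
    (hinv : h' * h = 1) (hinv' : h * h' = 1) {K : ℝ} (hK1 : 1 ≤ K)
    (hKh : ∑ p, ∑ q, (h p q) ^ 2 ≤ K) (hKh' : ∑ p, ∑ q, (h' p q) ^ 2 ≤ K)
    (g : Matrix (Idx m n) (Idx m n) ℝ) :
    alphaT m n t g ≤ K ^ (m + n) * alphaT m n t (h * g) := by
  have hc1 : (1 : ℝ) ≤ K ^ (m + n) := one_le_pow₀ hK1
  have hc0 : (0 : ℝ) < K ^ (m + n) := lt_of_lt_of_le one_pos hc1
  rw [alphaT, alphaT, Finset.mul_sum]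
  refine Finset.sum_le_sum fun i _ => ?_
  have hb : (0 : ℝ) ≤ (m + n : ℝ) - 1 := by
    have : (1 : ℝ) ≤ (m + n : ℕ) := by exact_mod_cast hmn
    push_cast at this ⊢
    linarith
  have hcoef : (0 : ℝ) ≤ (((m + n : ℝ) - 1) ^ (i * (m + n - i)))⁻¹ *
      Real.exp (-((m * n : ℝ) + 1 / 2) * ((i * (m + n - i) : ℕ) : ℝ) * t) :=
    mul_nonneg (inv_nonneg.mpr (pow_nonneg hb _)) (Real.exp_pos _).le
  have h1 : Real.sqrt (alpha m n g i) ≤ K ^ (m + n) * Real.sqrt (alpha m n (h * g) i) := by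
    calc Real.sqrt (alpha m n g i)
        ≤ Real.sqrt (K ^ (m + n) * alpha m n (h * g) i) :=
          Real.sqrt_le_sqrt (alpha_le_mul h h' hinv hinv' hK1 hKh hKh' g i)
      _ = Real.sqrt (K ^ (m + n)) * Real.sqrt (alpha m n (h * g) i) :=
          Real.sqrt_mul hc0.le _
      _ ≤ K ^ (m + n) * Real.sqrt (alpha m n (h * g) i) := by
          refine mul_le_mul_of_nonneg_right ?_ (Real.sqrt_nonneg _)
          rw [show (Real.sqrt (K ^ (m+n)) ≤ K ^ (m+n)) = _ from rfl]
          exact (Real.sqrt_le_left hc0.le).mpr (by nlinarith)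
  calc (((m + n : ℝ) - 1) ^ (i * (m + n - i)))⁻¹ *
      Real.exp (-((m * n : ℝ) + 1 / 2) * ((i * (m + n - i) : ℕ) : ℝ) * t) *
      Real.sqrt (alpha m n g i)
      ≤ (((m + n : ℝ) - 1) ^ (i * (m + n - i)))⁻¹ *
      Real.exp (-((m * n : ℝ) + 1 / 2) * ((i * (m + n - i) : ℕ) : ℝ) * t) *
      (K ^ (m + n) * Real.sqrt (alpha m n (h * g) i)) :=
        mul_le_mul_of_nonneg_left h1 hcoef
    _ = K ^ (m + n) * ((((m + n : ℝ) - 1) ^ (i * (m + n - i)))⁻¹ *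
      Real.exp (-((m * n : ℝ) + 1 / 2) * ((i * (m + n - i) : ℕ) : ℝ) * t) *
      Real.sqrt (alpha m n (h * g) i)) := by ring

/-! ### Word algebra -/

lemma gt_zero (m n : ℕ) : gt m n 0 = 1 := by
  unfold gt
  rw [← Matrix.diagonal_one]
  congr 1
  funext x
  cases x <;> simp

lemma gt_add (m n : ℕ) (u v : ℝ) : gt m n u * gt m n v = gt m n (u + v) := by
  unfold gt
  rw [Matrix.diagonal_mul_diagonal]
  refine congrArg Matrix.diagonal (funext fun x => ?_)
  cases x <;>
    simp only [Sum.elim_inl, Sum.elim_inr] <;>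
    rw [← Real.exp_add] <;> congr 1 <;> ring

lemma hMat_add {m n : ℕ} (a b : Matrix (Fin m) (Fin n) ℝ) :
    hMat a * hMat b = hMat (a + b) := by
  unfold hMat
  rw [Matrix.fromBlocks_multiply]
  simp [add_comm]

lemma hMat_zero (m n : ℕ) : hMat (0 : Matrix (Fin m) (Fin n) ℝ) = 1 := by
  unfold hMat
  exact Matrix.fromBlocks_one

lemma hMat_gt (m n : ℕ) (u : ℝ) (a : Matrix (Fin m) (Fin n) ℝ) :
    hMat a * gt m n u = gt m n u * hMat (Real.exp (-((m + n : ℝ)) * u) • a) := by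
  ext p q
  rw [gt, Matrix.mul_diagonal, Matrix.diagonal_mul]
  rcases p with i | i <;> rcases q with j | j
  · simp [hMat, mul_comm]
  · simp only [hMat, Matrix.fromBlocks_apply₁₂, Sum.elim_inl, Sum.elim_inr,
      Matrix.smul_apply, smul_eq_mul]
    rw [← mul_assoc, ← Real.exp_add, mul_comm]
    congr 1
    push_cast
    ring
  · simp [hMat]
  · simp [hMat, mul_comm]

lemma word_eq (m n : ℕ) (t : ℝ) (s : ℕ → Mspace m n) (l : ℕ) :
    word m n t s l = gt m n (l * t) *
      hMat (∑ j ∈ Finset.Icc 1 l,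
        Real.exp (-((m + n : ℝ)) * ((j : ℝ) - 1) * t) • toMat (s j)) := by
  induction l with
  | zero => simp [word, gt_zero, hMat_zero]
  | succ l ih =>
    have hscal : Real.exp (-((m + n : ℝ)) * ((↑(l + 1) : ℝ) - 1) * t)
        = Real.exp (-((m + n : ℝ)) * ((l : ℝ) * t)) := by
      congr 1
      push_cast
      ring
    have hgt : gt m n t * gt m n ((l : ℝ) * t) = gt m n ((↑(l + 1) : ℝ) * t) := by
      rw [gt_add]
      congr 1
      push_cast
      ring
    show gt m n t * hMat (toMat (s (l + 1))) * word m n t s l = _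
    rw [ih, ← mul_assoc, mul_assoc (gt m n t), hMat_gt, ← mul_assoc, hgt, mul_assoc,
      hMat_add, Finset.sum_Icc_succ_top (by omega : 1 ≤ l + 1), hscal, add_comm]
    exact congrArg (fun z => gt m n ((1 + l : ℕ) * t) * hMat z) (add_comm _ _)

lemma frob_hMat {m n : ℕ} (a : Matrix (Fin m) (Fin n) ℝ) :
    ∑ p, ∑ q, (hMat a p q) ^ 2 = (m : ℝ) + n + ∑ i, ∑ j, (a i j) ^ 2 := by
  rw [Fintype.sum_sum_type]
  simp only [Fintype.sum_sum_type, hMat, Matrix.fromBlocks_apply₁₁,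
    Matrix.fromBlocks_apply₁₂, Matrix.fromBlocks_apply₂₁, Matrix.fromBlocks_apply₂₂]
  have h1 : ∀ (N : ℕ) (i : Fin N), ∑ i' : Fin N, ((1 : Matrix (Fin N) (Fin N) ℝ) i i') ^ 2
      = 1 := by
    intro N i
    simp [Matrix.one_apply, apply_ite (· ^ (2:ℕ))]
  simp only [h1]
  rw [Finset.sum_add_distrib]
  simp only [Finset.sum_const, Finset.card_univ, Fintype.card_fin, nsmul_eq_mul, mul_one,
    Matrix.zero_apply, ne_eq, OfNat.ofNat_ne_zero, not_false_eq_true, zero_pow,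
    Finset.sum_const_zero, add_zero]
  ring

end Aux

/-- **Lemma 4.2.**  There is `C ≥ 1`, depending only on `m` and `n`, such that for every
integer `k ≥ 2`, every real `t ≥ 2`, every unimodular lattice `x = g·ℤ^{m+n}`, every
`M > 0`, and all tuples `(s_1,…,s_k)`, `(s'_1,…,s'_k)` of elements of `B(1)` with
`Σ_{j=1}^k e^{−(m+n)(j−1)t}·s_j = Σ_{j=1}^k e^{−(m+n)(j−1)t}·s'_j`: if
`α̃^t(g_t h_{s'_{k−1}} ⋯ g_t h_{s'_1} x) > M` then
`α̃^t(g_t h_{s_{k−1}} ⋯ g_t h_{s_1} x) > M/C`. -/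
theorem word_alphaT_comparison (m n : ℕ) (hm : 0 < m) (hn : 0 < n) :
    ∃ C : ℝ, 1 ≤ C ∧
      ∀ k : ℕ, 2 ≤ k → ∀ t : ℝ, 2 ≤ t →
      ∀ g : Matrix (Idx m n) (Idx m n) ℝ, g.det = 1 →
      ∀ M : ℝ, 0 < M →
      ∀ s s' : ℕ → Mspace m n,
        (∀ j : ℕ, 1 ≤ j → j ≤ k → s j ∈ Metric.ball (0 : Mspace m n) 1) →
        (∀ j : ℕ, 1 ≤ j → j ≤ k → s' j ∈ Metric.ball (0 : Mspace m n) 1) →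
        (∑ j ∈ Finset.Icc 1 k, Real.exp (-((m + n : ℝ)) * ((j : ℝ) - 1) * t) • s j
          = ∑ j ∈ Finset.Icc 1 k, Real.exp (-((m + n : ℝ)) * ((j : ℝ) - 1) * t) • s' j) →
        alphaT m n t (word m n t s' (k - 1) * g) > M →
        alphaT m n t (word m n t s (k - 1) * g) > M / C := by
  classical
  set K : ℝ := (m : ℝ) + n + 4 with hK
  have hK1 : (1 : ℝ) ≤ K := by
    have : (0:ℝ) ≤ (m:ℝ) := Nat.cast_nonneg m
    have : (0:ℝ) ≤ (n:ℝ) := Nat.cast_nonneg n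
    rw [hK]; nlinarith [Nat.cast_nonneg (α := ℝ) m, Nat.cast_nonneg (α := ℝ) n]
  refine ⟨K ^ (m + n), one_le_pow₀ hK1, ?_⟩
  intro k hk t ht g hg M hM s s' hs hs' hsum halpha
  have hC0 : (0 : ℝ) < K ^ (m + n) :=
    lt_of_lt_of_le one_pos (one_le_pow₀ hK1)
  obtain ⟨l, rfl⟩ : ∃ l, k = l + 1 := ⟨k - 1, by omega⟩
  have hl1 : 1 ≤ l := by omega
  have hlk : l + 1 - 1 = l := by omega
  rw [hlk] at halpha ⊢
  -- the difference matrix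
  set E : Matrix (Fin m) (Fin n) ℝ := toMat (s' (l + 1)) - toMat (s (l + 1)) with hE
  set c : ℝ := Real.exp (-((m + n : ℝ)) * ((↑(l + 1) : ℝ) - 1) * t) with hc
  -- apply toMat to the sum hypothesis
  have htoMat_sum : ∀ (f : ℕ → Mspace m n) (F : Finset ℕ) (co : ℕ → ℝ),
      toMat (∑ j ∈ F, co j • f j) = ∑ j ∈ F, co j • toMat (f j) := by
    intro f F co
    classical
    induction F using Finset.induction_on with
    | empty => ext i j; simp [toMat]
    | insert a F hx ih =>
        rw [Finset.sum_insert hx, Finset.sum_insert hx, ← ih]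
        ext i j
        simp [toMat]
  have hsum' : ∑ j ∈ Finset.Icc 1 (l + 1),
        Real.exp (-((m + n : ℝ)) * ((j : ℝ) - 1) * t) • toMat (s j)
      = ∑ j ∈ Finset.Icc 1 (l + 1),
        Real.exp (-((m + n : ℝ)) * ((j : ℝ) - 1) * t) • toMat (s' j) := by
    rw [← htoMat_sum, ← htoMat_sum, hsum]
  rw [Finset.sum_Icc_succ_top (by omega : 1 ≤ l + 1),
    Finset.sum_Icc_succ_top (by omega : 1 ≤ l + 1)] at hsum'
  set Bs : Matrix (Fin m) (Fin n) ℝ := ∑ j ∈ Finset.Icc 1 l,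
    Real.exp (-((m + n : ℝ)) * ((j : ℝ) - 1) * t) • toMat (s j) with hBs
  set Bs' : Matrix (Fin m) (Fin n) ℝ := ∑ j ∈ Finset.Icc 1 l,
    Real.exp (-((m + n : ℝ)) * ((j : ℝ) - 1) * t) • toMat (s' j) with hBs'
  rw [← hc] at hsum'
  have hdelta : Bs - Bs' = c • E := by
    rw [hE, smul_sub, sub_eq_sub_iff_add_eq_add, hsum']
    exact add_comm _ _
  -- the word identity
  have hone : Real.exp (-((m + n : ℝ)) * ((l : ℝ) * t)) *
      Real.exp (((m + n : ℝ)) * ((l : ℝ) * t)) = 1 := by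
    rw [← Real.exp_add, show -((m + n : ℝ)) * ((l : ℝ) * t) + ((m + n : ℝ)) * ((l : ℝ) * t)
      = 0 from by ring, Real.exp_zero]
  have hone' : Real.exp (((m + n : ℝ)) * ((l : ℝ) * t)) *
      Real.exp (-((m + n : ℝ)) * ((l : ℝ) * t)) = 1 := by
    rw [← Real.exp_add, show ((m + n : ℝ)) * ((l : ℝ) * t) + -((m + n : ℝ)) * ((l : ℝ) * t)
      = 0 from by ring, Real.exp_zero]
  have hcc : c = Real.exp (-((m + n : ℝ)) * ((l : ℝ) * t)) := by
    rw [hc]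
    congr 1
    push_cast
    ring
  have hword : word m n t s l * g
      = hMat (Real.exp (((m + n : ℝ)) * ((l : ℝ) * t)) • c • E) * (word m n t s' l * g) := by
    rw [word_eq m n t s l, word_eq m n t s' l, ← hBs, ← hBs']
    have hBsplit : Bs = c • E + Bs' := by
      rw [← hdelta]; abel
    rw [hBsplit, ← hMat_add]
    have hcomm : hMat (Real.exp (((m + n : ℝ)) * ((l : ℝ) * t)) • c • E) * gt m n ((l : ℝ) * t)
        = gt m n ((l : ℝ) * t) * hMat (c • E) := by
      rw [hMat_gt]
      congr 2
      rw [smul_smul, hone, one_smul]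
    rw [← mul_assoc, ← mul_assoc, ← hcomm]
    simp only [mul_assoc]
  -- the scalar in front of E is 1
  have hscalE : Real.exp (((m + n : ℝ)) * ((l : ℝ) * t)) • c • E = E := by
    rw [hcc, smul_smul, hone', one_smul]
  rw [hscalE] at hword
  -- Frobenius norm bounds
  have hEnorm : ∑ i, ∑ j, (E i j) ^ 2 ≤ 4 := by
    have h1 : ‖s' (l + 1) - s (l + 1)‖ < 2 := by
      have ha := mem_ball_zero_iff.mp (hs (l + 1) (by omega) (by omega))
      have hb := mem_ball_zero_iff.mp (hs' (l + 1) (by omega) (by omega))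
      calc ‖s' (l + 1) - s (l + 1)‖ ≤ ‖s' (l + 1)‖ + ‖s (l + 1)‖ := norm_sub_le _ _
      _ < 2 := by linarith
    have h2 : ∑ i, ∑ j, (E i j) ^ 2 = ‖s' (l + 1) - s (l + 1)‖ ^ 2 := by
      rw [EuclideanSpace.norm_eq, Real.sq_sqrt (by positivity), Fintype.sum_prod_type]
      refine Finset.sum_congr rfl fun i _ => Finset.sum_congr rfl fun j _ => ?_
      simp [hE, toMat, Real.norm_eq_abs, sq_abs]
    rw [h2]
    nlinarith [norm_nonneg (s' (l + 1) - s (l + 1))]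
  have hfrobE : ∑ p, ∑ q, (hMat E p q) ^ 2 ≤ K := by
    rw [frob_hMat, hK]
    linarith
  have hfrobE' : ∑ p, ∑ q, (hMat (-E) p q) ^ 2 ≤ K := by
    rw [frob_hMat, hK]
    have : ∑ i, ∑ j, ((-E) i j) ^ 2 = ∑ i, ∑ j, (E i j) ^ 2 := by
      refine Finset.sum_congr rfl fun i _ => Finset.sum_congr rfl fun j _ => ?_
      simp
    rw [this]
    linarith
  have hinv : hMat (-E) * hMat E = 1 := by
    rw [hMat_add]
    simp [hMat_zero]
  have hinv' : hMat E * hMat (-E) = 1 := by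
    rw [hMat_add]
    simp [hMat_zero]
  -- conclude
  have hmain : alphaT m n t (word m n t s' l * g)
      ≤ K ^ (m + n) * alphaT m n t (word m n t s l * g) := by
    have := alphaT_le_mul (m := m) (n := n) (by omega) t (hMat E) (hMat (-E))
      hinv hinv' hK1 hfrobE hfrobE' (word m n t s' l * g)
    rwa [← hword] at this
  show M / K ^ (m + n) < _
  rw [div_lt_iff₀ hC0]
  calc M < alphaT m n t (word m n t s' l * g) := halpha
  _ ≤ K ^ (m + n) * alphaT m n t (word m n t s l * g) := hmain
  _ = alphaT m n t (word m n t s l * g) * K ^ (m + n) := mul_comm _ _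



end DiagFlows
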